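/- arXiv:2107.03221 — 2 statements merged into one kernel-verified Lean document; each statement's English description precedes it below -/
import Mathlib

section
/- Let D={β, 2α+β} and let ξ:D→ℂ∖{0} be a map. A linear form λ∈𝔫* belongs to the basic subvariety 𝒪_{D,ξ} if and only if λ_{2α+β}=ξ(2α+β), 2c₂λ_βλ_{2α+β} − c₁λ_{α+β}² = 2c₂ξ(β)ξ(2α+β), and λ_{3α+β}=λ_{3α+2β}=0 (with λ_α arbitrary). -/
open scoped RealInnerProductSpace

/-- The exponential of a (nilpotent) endomorphism, as a finite sum. -/
noncomputable def expNil {M : Type*} [AddCommGroup M] [Module ℂ M] (A : Module.End ℂ M) :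
    Module.End ℂ M :=
  ∑ k ∈ Finset.range (nilpotencyClass A), (k.factorial : ℂ)⁻¹ • A ^ k

lemma expNil_eq {M : Type*} [AddCommGroup M] [Module ℂ M] (A : Module.End ℂ M) (m : ℕ)
    (h : A ^ m = 0) :
    expNil A = ∑ k ∈ Finset.range m, (k.factorial : ℂ)⁻¹ • A ^ k := by
  have hle : nilpotencyClass A ≤ m := Nat.sInf_le h
  rw [expNil]
  refine Finset.sum_subset (Finset.range_subset_range.mpr hle) ?_
  intro k _ hk
  rw [Finset.mem_range, not_lt] at hk
  rw [pow_eq_zero_of_le hk (pow_nilpotencyClass ⟨m, h⟩), smul_zero]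

lemma exp5_apply {M : Type*} [AddCommGroup M] [Module ℂ M] (A : Module.End ℂ M)
    (h : A ^ 5 = 0) (v : M) :
    expNil A v = v + A v + (2⁻¹ : ℂ) • A (A v) + (6⁻¹ : ℂ) • A (A (A v))
      + (24⁻¹ : ℂ) • A (A (A (A v))) := by
  rw [expNil_eq _ 5 h]
  simp only [Finset.sum_range_succ, Finset.sum_range_zero, zero_add, LinearMap.add_apply,
    LinearMap.smul_apply, pow_succ, pow_zero, Module.End.mul_apply, Module.End.one_apply]
  norm_num [Nat.factorial]

lemma exp5_ad_apply {n : Type*} [LieRing n] [LieAlgebra ℂ n] (x : n)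
    (h : (-(LieAlgebra.ad ℂ n x)) ^ 5 = 0) (v : n) :
    expNil (-(LieAlgebra.ad ℂ n x)) v =
      v - ⁅x, v⁆ + (2⁻¹ : ℂ) • ⁅x, ⁅x, v⁆⁆ - (6⁻¹ : ℂ) • ⁅x, ⁅x, ⁅x, v⁆⁆⁆
        + (24⁻¹ : ℂ) • ⁅x, ⁅x, ⁅x, ⁅x, v⁆⁆⁆⁆ := by
  rw [exp5_apply _ h]
  simp only [LinearMap.neg_apply, LieAlgebra.ad_apply, lie_neg, neg_neg, smul_neg]
  abel

/-- The coadjoint orbit `Ω_{D,ξ}` of the linear form `f_{D,ξ} = ∑_{γ∈D} ξ(γ) e_γ*`,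
consisting of all `f_{D,ξ} ∘ exp(−ad x)`, `x ∈ 𝔫`.  Roots are encoded by indices. -/
noncomputable def coadjointOrbit {ι : Type*} {n : Type*} [LieRing n] [LieAlgebra ℂ n]
    (e : Module.Basis ι ℂ n) (D : Finset ι) (ξ : ι → ℂ) :
    Set (Module.Dual ℂ n) :=
  {lam | ∃ x : n, lam = (∑ i ∈ D, ξ i • e.coord i).comp (expNil (-(LieAlgebra.ad ℂ n x)))}

/-- The basic subvariety `𝒪_{D,ξ} = Σ_{γ∈D} Ω_{{γ},ξ|{γ}}`. -/
noncomputable def basicSubvariety {ι : Type*} [DecidableEq ι] {n : Type*} [LieRing n] [LieAlgebra ℂ n]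
    (e : Module.Basis ι ℂ n) (D : Finset ι) (ξ : ι → ℂ) :
    Set (Module.Dual ℂ n) :=
  {lam | ∃ μ : ι → Module.Dual ℂ n,
    (∀ i ∈ D, μ i ∈ coadjointOrbit e {i} ξ) ∧ lam = ∑ i ∈ D, μ i}

set_option maxHeartbeats 1000000 in
theorem stmt5 {n : Type*} [LieRing n] [LieAlgebra ℂ n]
    (α β : EuclideanSpace ℝ (Fin 2))
    (hαα : ⟪α, α⟫ = 1) (hββ : ⟪β, β⟫ = 3) (hαβ : ⟪α, β⟫ = -(3/2))
    -- the six positive roots of `G₂`: `α, β, α+β, 2α+β, 3α+β, 3α+2β`, indexed by `Fin 6`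
    (root : Fin 6 → EuclideanSpace ℝ (Fin 2))
    (hroot : root = ![α, β, α + β, (2:ℝ) • α + β, (3:ℝ) • α + β, (3:ℝ) • α + (2:ℝ) • β])
    (c₁ c₂ c₃ c₄ c₅ : ℂ)
    (hc₁ : c₁ ≠ 0) (hc₂ : c₂ ≠ 0) (hc₃ : c₃ ≠ 0) (hc₄ : c₄ ≠ 0) (hc₅ : c₅ ≠ 0)
    (e : Module.Basis (Fin 6) ℂ n)
    (h01 : ⁅e 0, e 1⁆ = c₁ • e 2)
    (h02 : ⁅e 0, e 2⁆ = c₂ • e 3)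
    (h03 : ⁅e 0, e 3⁆ = c₃ • e 4)
    (h41 : ⁅e 4, e 1⁆ = c₄ • e 5)
    (h23 : ⁅e 2, e 3⁆ = c₅ • e 5)
    (h0 : ∀ i j : Fin 6, root i + root j ∉ Set.range root → ⁅e i, e j⁆ = 0)
    (hnil : ∀ x : n, IsNilpotent (LieAlgebra.ad ℂ n x))
    (ξ : Fin 6 → ℂ) (hξ₁ : ξ 1 ≠ 0) (hξ₃ : ξ 3 ≠ 0)
    (lam : Module.Dual ℂ n) :
    lam ∈ basicSubvariety e {1, 3} ξ ↔
      (lam (e 3) = ξ 3 ∧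
        2 * c₂ * lam (e 1) * lam (e 3) - c₁ * lam (e 2) ^ 2 = 2 * c₂ * ξ 1 * ξ 3 ∧
        lam (e 4) = 0 ∧ lam (e 5) = 0) := by
  -- ## Step 1: linear independence of α and β
  have hli : ∀ a b : ℝ, a • α + b • β = 0 → a = 0 ∧ b = 0 := by
    intro a b h
    have h1 : ⟪a • α + b • β, α⟫ = 0 := by rw [h]; simp
    have h2 : ⟪a • α + b • β, β⟫ = 0 := by rw [h]; simp
    have hβα : ⟪β, α⟫ = -(3/2) := by rw [real_inner_comm]; exact hαβ
    rw [inner_add_left, real_inner_smul_left, real_inner_smul_left, hαα, hβα] at h1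
    rw [inner_add_left, real_inner_smul_left, real_inner_smul_left, hββ, hαβ] at h2
    constructor <;> linarith
  have hcoef : ∀ a b a' b' : ℝ, a • α + b • β = a' • α + b' • β → a = a' ∧ b = b' := by
    intro a b a' b' h
    have h0' : (a - a') • α + (b - b') • β = 0 := by
      rw [sub_smul, sub_smul,
        show a • α - a' • α + (b • β - b' • β) = (a • α + b • β) - (a' • α + b' • β) by abel, h,
        sub_self]
    obtain ⟨ha, hb⟩ := hli _ _ h0'
    constructor <;> linarith
  -- root values
  have hr0 : root 0 = (1:ℝ) • α + (0:ℝ) • β := by rw [hroot]; simp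
  have hr1 : root 1 = (0:ℝ) • α + (1:ℝ) • β := by rw [hroot]; simp
  have hr2 : root 2 = (1:ℝ) • α + (1:ℝ) • β := by rw [hroot]; simp
  have hr3 : root 3 = (2:ℝ) • α + (1:ℝ) • β := by rw [hroot]; simp
  have hr4 : root 4 = (3:ℝ) • α + (1:ℝ) • β := by rw [hroot]; simp
  have hr5 : root 5 = (3:ℝ) • α + (2:ℝ) • β := by rw [hroot]; rfl
  have hnr : ∀ a b : ℝ, ¬((a = 1 ∧ b = 0) ∨ (a = 0 ∧ b = 1) ∨ (a = 1 ∧ b = 1) ∨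
      (a = 2 ∧ b = 1) ∨ (a = 3 ∧ b = 1) ∨ (a = 3 ∧ b = 2)) →
      a • α + b • β ∉ Set.range root := by
    rintro a b h ⟨k, hk⟩
    refine h ?_
    fin_cases k
    · exact Or.inl ⟨(hcoef _ _ _ _ (hr0 ▸ hk)).1.symm, (hcoef _ _ _ _ (hr0 ▸ hk)).2.symm⟩
    · exact Or.inr <| Or.inl
        ⟨(hcoef _ _ _ _ (hr1 ▸ hk)).1.symm, (hcoef _ _ _ _ (hr1 ▸ hk)).2.symm⟩
    · exact Or.inr <| Or.inr <| Or.inl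
        ⟨(hcoef _ _ _ _ (hr2 ▸ hk)).1.symm, (hcoef _ _ _ _ (hr2 ▸ hk)).2.symm⟩
    · exact Or.inr <| Or.inr <| Or.inr <| Or.inl
        ⟨(hcoef _ _ _ _ (hr3 ▸ hk)).1.symm, (hcoef _ _ _ _ (hr3 ▸ hk)).2.symm⟩
    · exact Or.inr <| Or.inr <| Or.inr <| Or.inr <| Or.inl
        ⟨(hcoef _ _ _ _ (hr4 ▸ hk)).1.symm, (hcoef _ _ _ _ (hr4 ▸ hk)).2.symm⟩
    · exact Or.inr <| Or.inr <| Or.inr <| Or.inr <| Or.inr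
        ⟨(hcoef _ _ _ _ (hr5 ▸ hk)).1.symm, (hcoef _ _ _ _ (hr5 ▸ hk)).2.symm⟩
  -- ## Step 2: the full bracket table
  have hz : ∀ (i j : Fin 6) (a b : ℝ), root i + root j = a • α + b • β →
      ¬((a = 1 ∧ b = 0) ∨ (a = 0 ∧ b = 1) ∨ (a = 1 ∧ b = 1) ∨
        (a = 2 ∧ b = 1) ∨ (a = 3 ∧ b = 1) ∨ (a = 3 ∧ b = 2)) → ⁅e i, e j⁆ = 0 := by
    intro i j a b hsum hf
    exact h0 i j (by rw [hsum]; exact hnr a b hf)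
  have z04 : ⁅e 0, e 4⁆ = 0 := hz 0 4 4 1 (by rw [hr0, hr4]; module) (by norm_num)
  have z40 : ⁅e 4, e 0⁆ = 0 := hz 4 0 4 1 (by rw [hr0, hr4]; module) (by norm_num)
  have z05 : ⁅e 0, e 5⁆ = 0 := hz 0 5 4 2 (by rw [hr0, hr5]; module) (by norm_num)
  have z50 : ⁅e 5, e 0⁆ = 0 := hz 5 0 4 2 (by rw [hr0, hr5]; module) (by norm_num)
  have z12 : ⁅e 1, e 2⁆ = 0 := hz 1 2 1 2 (by rw [hr1, hr2]; module) (by norm_num)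
  have z21 : ⁅e 2, e 1⁆ = 0 := hz 2 1 1 2 (by rw [hr1, hr2]; module) (by norm_num)
  have z13 : ⁅e 1, e 3⁆ = 0 := hz 1 3 2 2 (by rw [hr1, hr3]; module) (by norm_num)
  have z31 : ⁅e 3, e 1⁆ = 0 := hz 3 1 2 2 (by rw [hr1, hr3]; module) (by norm_num)
  have z15 : ⁅e 1, e 5⁆ = 0 := hz 1 5 3 3 (by rw [hr1, hr5]; module) (by norm_num)
  have z51 : ⁅e 5, e 1⁆ = 0 := hz 5 1 3 3 (by rw [hr1, hr5]; module) (by norm_num)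
  have z24 : ⁅e 2, e 4⁆ = 0 := hz 2 4 4 2 (by rw [hr2, hr4]; module) (by norm_num)
  have z42 : ⁅e 4, e 2⁆ = 0 := hz 4 2 4 2 (by rw [hr2, hr4]; module) (by norm_num)
  have z25 : ⁅e 2, e 5⁆ = 0 := hz 2 5 4 3 (by rw [hr2, hr5]; module) (by norm_num)
  have z52 : ⁅e 5, e 2⁆ = 0 := hz 5 2 4 3 (by rw [hr2, hr5]; module) (by norm_num)
  have z34 : ⁅e 3, e 4⁆ = 0 := hz 3 4 5 2 (by rw [hr3, hr4]; module) (by norm_num)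
  have z43 : ⁅e 4, e 3⁆ = 0 := hz 4 3 5 2 (by rw [hr3, hr4]; module) (by norm_num)
  have z35 : ⁅e 3, e 5⁆ = 0 := hz 3 5 5 3 (by rw [hr3, hr5]; module) (by norm_num)
  have z53 : ⁅e 5, e 3⁆ = 0 := hz 5 3 5 3 (by rw [hr3, hr5]; module) (by norm_num)
  have z45 : ⁅e 4, e 5⁆ = 0 := hz 4 5 6 3 (by rw [hr4, hr5]; module) (by norm_num)
  have z54 : ⁅e 5, e 4⁆ = 0 := hz 5 4 6 3 (by rw [hr4, hr5]; module) (by norm_num)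
  have h10 : ⁅e 1, e 0⁆ = -(c₁ • e 2) := by rw [← lie_skew, h01]
  have h20 : ⁅e 2, e 0⁆ = -(c₂ • e 3) := by rw [← lie_skew, h02]
  have h30 : ⁅e 3, e 0⁆ = -(c₃ • e 4) := by rw [← lie_skew, h03]
  have h14 : ⁅e 1, e 4⁆ = -(c₄ • e 5) := by rw [← lie_skew, h41]
  have h32 : ⁅e 3, e 2⁆ = -(c₅ • e 5) := by rw [← lie_skew, h23]
  -- ## Step 3: brackets with a general element
  have hxe : ∀ (x : n) (j : Fin 6), ⁅x, e j⁆ =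
      e.repr x 0 • ⁅e 0, e j⁆ + e.repr x 1 • ⁅e 1, e j⁆ + e.repr x 2 • ⁅e 2, e j⁆ +
      e.repr x 3 • ⁅e 3, e j⁆ + e.repr x 4 • ⁅e 4, e j⁆ + e.repr x 5 • ⁅e 5, e j⁆ := by
    intro x j
    conv_lhs => rw [← e.sum_repr x, Fin.sum_univ_six]
    simp only [add_lie, smul_lie]
  have B0 : ∀ x : n, ⁅x, e 0⁆ = (-(e.repr x 1 * c₁)) • e 2 + (-(e.repr x 2 * c₂)) • e 3
      + (-(e.repr x 3 * c₃)) • e 4 := by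
    intro x
    rw [hxe x 0, lie_self, h10, h20, h30, z40, z50]
    module
  have B1 : ∀ x : n, ⁅x, e 1⁆ = (e.repr x 0 * c₁) • e 2 + (e.repr x 4 * c₄) • e 5 := by
    intro x
    rw [hxe x 1, lie_self, h01, z21, z31, h41, z51]
    module
  have B2 : ∀ x : n, ⁅x, e 2⁆ = (e.repr x 0 * c₂) • e 3 + (-(e.repr x 3 * c₅)) • e 5 := by
    intro x
    rw [hxe x 2, lie_self, h02, z12, h32, z42, z52]
    module
  have B3 : ∀ x : n, ⁅x, e 3⁆ = (e.repr x 0 * c₃) • e 4 + (e.repr x 2 * c₅) • e 5 := by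
    intro x
    rw [hxe x 3, lie_self, h03, z13, h23, z43, z53]
    module
  have B4 : ∀ x : n, ⁅x, e 4⁆ = (-(e.repr x 1 * c₄)) • e 5 := by
    intro x
    rw [hxe x 4, lie_self, z04, h14, z24, z34, z54]
    module
  have B5 : ∀ x : n, ⁅x, e 5⁆ = 0 := by
    intro x
    rw [hxe x 5, lie_self, z05, z15, z25, z35, z45]
    module
  -- ## Step 4: nilpotency of order 5 and exponential values
  have hA5 : ∀ x : n, (-(LieAlgebra.ad ℂ n x)) ^ 5 = 0 := by
    intro x
    refine Module.Basis.ext e fun j => ?_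
    simp only [pow_succ, pow_zero, Module.End.mul_apply, Module.End.one_apply,
      LinearMap.neg_apply, LieAlgebra.ad_apply, LinearMap.zero_apply]
    fin_cases j <;>
      simp [B0, B1, B2, B3, B4, B5, lie_add, lie_smul, lie_neg, neg_lie, smul_add, smul_smul]
  have hco : ∀ i j : Fin 6, e.coord i (e j) = if j = i then 1 else 0 := by
    intro i j
    simp [Module.Basis.coord_apply, Module.Basis.repr_self, Finsupp.single_apply]
  have hFj : ∀ (x : n) (j : Fin 6), (expNil (-(LieAlgebra.ad ℂ n x))) (e j) =
      e j - ⁅x, e j⁆ + (2⁻¹ : ℂ) • ⁅x, ⁅x, e j⁆⁆ - (6⁻¹ : ℂ) • ⁅x, ⁅x, ⁅x, e j⁆⁆⁆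
        + (24⁻¹ : ℂ) • ⁅x, ⁅x, ⁅x, ⁅x, e j⁆⁆⁆⁆ := fun x j => exp5_ad_apply x (hA5 x) (e j)
  have hF1 : ∀ (x : n) (j : Fin 6),
      e.coord 1 ((expNil (-(LieAlgebra.ad ℂ n x))) (e j)) = if j = 1 then 1 else 0 := by
    intro x j
    rw [hFj]
    fin_cases j <;>
      simp [B0, B1, B2, B3, B4, B5, lie_add, lie_smul, smul_add, smul_smul, hco, map_add,
        map_smul, map_sub, map_neg]
  have hF30 : ∀ x : n, e.coord 3 ((expNil (-(LieAlgebra.ad ℂ n x))) (e 0)) =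
      e.repr x 2 * c₂ - 2⁻¹ * e.repr x 0 * e.repr x 1 * c₁ * c₂ := by
    intro x
    rw [hFj]
    simp [B0, B1, B2, B3, B4, B5, lie_add, lie_smul, smul_add, smul_smul, hco, map_add,
      map_smul, map_sub, map_neg]
    ring
  have hF31 : ∀ x : n, e.coord 3 ((expNil (-(LieAlgebra.ad ℂ n x))) (e 1)) =
      2⁻¹ * e.repr x 0 * e.repr x 0 * c₁ * c₂ := by
    intro x
    rw [hFj]
    simp [B0, B1, B2, B3, B4, B5, lie_add, lie_smul, smul_add, smul_smul, hco, map_add,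
      map_smul, map_sub, map_neg]
    ring
  have hF32 : ∀ x : n, e.coord 3 ((expNil (-(LieAlgebra.ad ℂ n x))) (e 2)) =
      -(e.repr x 0 * c₂) := by
    intro x
    rw [hFj]
    simp [B0, B1, B2, B3, B4, B5, lie_add, lie_smul, smul_add, smul_smul, hco, map_add,
      map_smul, map_sub, map_neg]
  have hF33 : ∀ x : n, e.coord 3 ((expNil (-(LieAlgebra.ad ℂ n x))) (e 3)) = 1 := by
    intro x
    rw [hFj]
    simp [B0, B1, B2, B3, B4, B5, lie_add, lie_smul, smul_add, smul_smul, hco, map_add,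
      map_smul, map_sub, map_neg]
  have hF34 : ∀ x : n, e.coord 3 ((expNil (-(LieAlgebra.ad ℂ n x))) (e 4)) = 0 := by
    intro x
    rw [hFj]
    simp [B0, B1, B2, B3, B4, B5, lie_add, lie_smul, smul_add, smul_smul, hco, map_add,
      map_smul, map_sub, map_neg]
  have hF35 : ∀ x : n, e.coord 3 ((expNil (-(LieAlgebra.ad ℂ n x))) (e 5)) = 0 := by
    intro x
    rw [hFj]
    simp [B0, B1, B2, B3, B4, B5, lie_add, lie_smul, smul_add, smul_smul, hco, map_add,
      map_smul, map_sub, map_neg]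
  -- ## Step 5: characterization of the two single orbits
  have horb1 : ∀ lam' : Module.Dual ℂ n,
      lam' ∈ coadjointOrbit e {1} ξ ↔ lam' = ξ 1 • e.coord 1 := by
    intro lam'
    simp only [coadjointOrbit, Set.mem_setOf_eq, Finset.sum_singleton]
    constructor
    · rintro ⟨x, hx⟩
      refine Module.Basis.ext e fun j => ?_
      rw [hx]
      simp only [LinearMap.comp_apply, LinearMap.smul_apply, smul_eq_mul]
      rw [hF1, hco]
    · intro h
      refine ⟨0, Module.Basis.ext e fun j => ?_⟩
      rw [h]
      simp only [LinearMap.comp_apply, LinearMap.smul_apply, smul_eq_mul]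
      rw [hF1, hco]
  have horb3 : ∀ lam' : Module.Dual ℂ n,
      lam' ∈ coadjointOrbit e {3} ξ ↔
        (lam' (e 3) = ξ 3 ∧ lam' (e 4) = 0 ∧ lam' (e 5) = 0 ∧
          2 * c₂ * ξ 3 * lam' (e 1) = c₁ * lam' (e 2) ^ 2) := by
    intro lam'
    simp only [coadjointOrbit, Set.mem_setOf_eq, Finset.sum_singleton]
    constructor
    · rintro ⟨x, hx⟩
      have hv : ∀ j : Fin 6,
          lam' (e j) = ξ 3 * e.coord 3 ((expNil (-(LieAlgebra.ad ℂ n x))) (e j)) := by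
        intro j
        rw [hx]
        simp only [LinearMap.comp_apply, LinearMap.smul_apply, smul_eq_mul]
      refine ⟨?_, ?_, ?_, ?_⟩
      · rw [hv 3, hF33]; ring
      · rw [hv 4, hF34]; ring
      · rw [hv 5, hF35]; ring
      · rw [hv 1, hv 2, hF31, hF32]; ring
    · rintro ⟨h3, h4, h5, hrel⟩
      set t : ℂ := -(lam' (e 2)) / (ξ 3 * c₂) with ht
      set s : ℂ := lam' (e 0) / (ξ 3 * c₂) with hs
      refine ⟨t • e 0 + s • e 2, Module.Basis.ext e fun j => ?_⟩
      have hre : ∀ i : Fin 6, e.repr (t • e 0 + s • e 2) i =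
          if i = 0 then t else if i = 2 then s else 0 := by
        intro i
        simp only [map_add, map_smul, Module.Basis.repr_self, Finsupp.coe_add, Finsupp.coe_smul,
          Pi.add_apply, Pi.smul_apply, Finsupp.single_apply, smul_eq_mul]
        by_cases h0' : i = 0 <;> by_cases h2' : i = 2 <;>
          simp [h0', h2', eq_comm] <;> omega
      simp only [LinearMap.comp_apply, LinearMap.smul_apply, smul_eq_mul]
      fin_cases j <;>
        simp only [Fin.zero_eta, Fin.mk_one, Fin.isValue, show (⟨2, by omega⟩ : Fin 6) = 2 from rfl,
          show (⟨3, by omega⟩ : Fin 6) = 3 from rfl, show (⟨4, by omega⟩ : Fin 6) = 4 from rfl,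
          show (⟨5, by omega⟩ : Fin 6) = 5 from rfl]
      · rw [hF30, hre 0, hre 1, hre 2,
          if_neg (show (2 : Fin 6) ≠ 0 by decide), if_pos (show (2 : Fin 6) = 2 from rfl),
          if_neg (show (1 : Fin 6) ≠ 0 by decide), if_neg (show (1 : Fin 6) ≠ 2 by decide),
          if_pos (show (0 : Fin 6) = 0 from rfl), ht, hs]
        field_simp
        ring
      · rw [hF31, hre 0, if_pos (show (0 : Fin 6) = 0 from rfl), ht]
        field_simp
        linear_combination hrel
      · rw [hF32, hre 0, if_pos (show (0 : Fin 6) = 0 from rfl), ht]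
        field_simp
      · rw [hF33, h3]; ring
      · rw [hF34, h4]; ring
      · rw [hF35, h5]; ring
  -- ## Step 6: the main equivalence
  simp only [basicSubvariety, Set.mem_setOf_eq]
  constructor
  · rintro ⟨μ, hmem, hsum⟩
    have h1me := (horb1 (μ 1)).mp (hmem 1 (by decide))
    obtain ⟨k3, k4, k5, krel⟩ := (horb3 (μ 3)).mp (hmem 3 (by decide))
    have hsum' : lam = μ 1 + μ 3 := by
      rw [hsum, Finset.sum_pair (by decide : (1 : Fin 6) ≠ 3)]
    have hval : ∀ j : Fin 6, lam (e j) = (μ 1) (e j) + (μ 3) (e j) := by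
      intro j; rw [hsum']; simp
    have hμ1 : ∀ j : Fin 6, (μ 1) (e j) = ξ 1 * (if j = 1 then 1 else 0) := by
      intro j; rw [h1me]; simp [hco]
    refine ⟨?_, ?_, ?_, ?_⟩
    · rw [hval 3, hμ1 3, if_neg (show (3 : Fin 6) ≠ 1 by decide), k3]; ring
    · rw [hval 1, hval 2, hval 3, hμ1 1, hμ1 2, hμ1 3, k3,
        if_pos (show (1 : Fin 6) = 1 from rfl), if_neg (show (2 : Fin 6) ≠ 1 by decide),
        if_neg (show (3 : Fin 6) ≠ 1 by decide)]
      linear_combination krel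
    · rw [hval 4, hμ1 4, if_neg (show (4 : Fin 6) ≠ 1 by decide), k4]; ring
    · rw [hval 5, hμ1 5, if_neg (show (5 : Fin 6) ≠ 1 by decide), k5]; ring
  · rintro ⟨k3, krel, k4, k5⟩
    refine ⟨fun i => if i = 3 then lam - ξ 1 • e.coord 1 else ξ 1 • e.coord 1, ?_, ?_⟩
    · intro i hi
      have hL : ∀ j : Fin 6, (lam - ξ 1 • e.coord 1) (e j) =
          lam (e j) - ξ 1 * (if j = 1 then 1 else 0) := by
        intro j; simp [hco]
      simp only [Finset.mem_insert, Finset.mem_singleton] at hi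
      rcases hi with rfl | rfl
      · simp only [if_neg (by decide : (1 : Fin 6) ≠ 3)]
        exact (horb1 _).mpr rfl
      · simp only [if_pos (rfl : (3 : Fin 6) = 3), eq_self_iff_true, if_true]
        refine (horb3 _).mpr ⟨?_, ?_, ?_, ?_⟩
        · rw [hL 3, if_neg (show (3 : Fin 6) ≠ 1 by decide), k3]; ring
        · rw [hL 4, if_neg (show (4 : Fin 6) ≠ 1 by decide), k4]; ring
        · rw [hL 5, if_neg (show (5 : Fin 6) ≠ 1 by decide), k5]; ring
        · rw [hL 1, hL 2, if_pos (show (1 : Fin 6) = 1 from rfl),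
            if_neg (show (2 : Fin 6) ≠ 1 by decide)]
          rw [k3] at krel
          linear_combination krel
    · rw [Finset.sum_pair (by decide : (1 : Fin 6) ≠ 3)]
      simp only [if_neg (by decide : (1 : Fin 6) ≠ 3), if_pos (rfl : (3 : Fin 6) = 3),
        eq_self_iff_true, if_true]
      module
end

section
/- Let D={α, 3α+2β} and let ξ:D→ℂ∖{0} be a map. A linear form λ∈𝔫* belongs to the basic subvariety 𝒪_{D,ξ} if and only if λ_{3α+2β}=ξ(3α+2β) and 2c₅λ_αλ_{3α+2β} − 2c₃λ_{α+β}λ_{3α+β} + c₂λ_{2α+β}² = 2c₅ξ(α)ξ(3α+2β) (with λ_β, λ_{α+β}, λ_{2α+β}, λ_{3α+β} arbitrary). -/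
open scoped RealInnerProductSpace

lemma expNil_eq_sum {M : Type*} [AddCommGroup M] [Module ℂ M] (A : Module.End ℂ M) {m : ℕ}
    (h : A ^ m = 0) :
    expNil A = ∑ k ∈ Finset.range m, (k.factorial : ℂ)⁻¹ • A ^ k := by
  have hle : nilpotencyClass A ≤ m := Nat.sInf_le h
  refine Finset.sum_subset (Finset.range_subset_range.2 hle) fun k _ hk => ?_
  rw [Finset.mem_range, not_lt] at hk
  rw [pow_eq_zero_of_le hk (pow_nilpotencyClass ⟨m, h⟩), smul_zero]

lemma expNil_eq5 {M : Type*} [AddCommGroup M] [Module ℂ M] (A : Module.End ℂ M)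
    (h : A ^ 5 = 0) :
    expNil A = 1 + A + (2:ℂ)⁻¹ • A ^ 2 + (6:ℂ)⁻¹ • A ^ 3 + (24:ℂ)⁻¹ • A ^ 4 := by
  rw [expNil_eq_sum A h]
  simp [Finset.sum_range_succ, Nat.factorial]

lemma expNil_zero {M : Type*} [AddCommGroup M] [Module ℂ M] :
    expNil (0 : Module.End ℂ M) = 1 := by
  rw [expNil_eq_sum (0 : Module.End ℂ M) (pow_one 0)]
  simp

lemma computeE {n : Type*} [LieRing n] [LieAlgebra ℂ n]
    (c₁ c₂ c₃ c₄ c₅ : ℂ) (e : Module.Basis (Fin 6) ℂ n)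
    (h01 : ⁅e 0, e 1⁆ = c₁ • e 2) (h02 : ⁅e 0, e 2⁆ = c₂ • e 3)
    (h03 : ⁅e 0, e 3⁆ = c₃ • e 4) (h41 : ⁅e 4, e 1⁆ = c₄ • e 5)
    (h23 : ⁅e 2, e 3⁆ = c₅ • e 5)
    (z04 : ⁅e 0, e 4⁆ = 0) (z05 : ⁅e 0, e 5⁆ = 0) (z12 : ⁅e 1, e 2⁆ = 0)
    (z13 : ⁅e 1, e 3⁆ = 0) (z15 : ⁅e 1, e 5⁆ = 0) (z24 : ⁅e 2, e 4⁆ = 0)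
    (z25 : ⁅e 2, e 5⁆ = 0) (z34 : ⁅e 3, e 4⁆ = 0) (z35 : ⁅e 3, e 5⁆ = 0)
    (z45 : ⁅e 4, e 5⁆ = 0)
    (y : n) (b0 b1 b2 b3 b4 b5 : ℂ)
    (hy : y = b0 • e 0 + b1 • e 1 + b2 • e 2 + b3 • e 3 + b4 • e 4 + b5 • e 5) :
    expNil (-(LieAlgebra.ad ℂ n y)) (e 0) = e 0 + ((1) * b1 * c₁) • e 2 + ((1) * b2 * c₂ + (-1/2) * b0 * b1 * c₁ * c₂) • e 3 + ((1) * b3 * c₃ + (-1/2) * b0 * b2 * c₂ * c₃ + (1/6) * b0 ^ 2 * b1 * c₁ * c₂ * c₃) • e 4 + ((-1/2) * b2 ^ 2 * c₂ * c₅ + (1/2) * b1 * b3 * c₃ * c₄ + (1/2) * b1 * b3 * c₁ * c₅ + (-1/6) * b0 * b1 * b2 * c₂ * c₃ * c₄ + (1/6) * b0 * b1 * b2 * c₁ * c₂ * c₅ + (1/24) * b0 ^ 2 * b1 ^ 2 * c₁ * c₂ * c₃ * c₄) • e 5 ∧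
    expNil (-(LieAlgebra.ad ℂ n y)) (e 1) = e 1 + ((-1) * b0 * c₁) • e 2 + ((1/2) * b0 ^ 2 * c₁ * c₂) • e 3 + ((-1/6) * b0 ^ 3 * c₁ * c₂ * c₃) • e 4 + ((-1) * b4 * c₄ + (-1/2) * b0 * b3 * c₁ * c₅ + (-1/6) * b0 ^ 2 * b2 * c₁ * c₂ * c₅ + (-1/24) * b0 ^ 3 * b1 * c₁ * c₂ * c₃ * c₄) • e 5 ∧
    expNil (-(LieAlgebra.ad ℂ n y)) (e 2) = e 2 + ((-1) * b0 * c₂) • e 3 + ((1/2) * b0 ^ 2 * c₂ * c₃) • e 4 + ((1) * b3 * c₅ + (1/2) * b0 * b2 * c₂ * c₅ + (1/6) * b0 ^ 2 * b1 * c₂ * c₃ * c₄) • e 5 ∧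
    expNil (-(LieAlgebra.ad ℂ n y)) (e 3) = e 3 + ((-1) * b0 * c₃) • e 4 + ((-1) * b2 * c₅ + (-1/2) * b0 * b1 * c₃ * c₄) • e 5 ∧
    expNil (-(LieAlgebra.ad ℂ n y)) (e 4) = e 4 + ((1) * b1 * c₄) • e 5 ∧
    expNil (-(LieAlgebra.ad ℂ n y)) (e 5) = e 5 := by
  set A := -(LieAlgebra.ad ℂ n y) with hAdef
  have h10 : ⁅e 1, e 0⁆ = -(c₁ • e 2) := by rw [← lie_skew, h01]
  have h20 : ⁅e 2, e 0⁆ = -(c₂ • e 3) := by rw [← lie_skew, h02]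
  have h30 : ⁅e 3, e 0⁆ = -(c₃ • e 4) := by rw [← lie_skew, h03]
  have h14 : ⁅e 1, e 4⁆ = -(c₄ • e 5) := by rw [← lie_skew, h41]
  have h32 : ⁅e 3, e 2⁆ = -(c₅ • e 5) := by rw [← lie_skew, h23]
  have z40 : ⁅e 4, e 0⁆ = 0 := by rw [← lie_skew, z04, neg_zero]
  have z50 : ⁅e 5, e 0⁆ = 0 := by rw [← lie_skew, z05, neg_zero]
  have z21 : ⁅e 2, e 1⁆ = 0 := by rw [← lie_skew, z12, neg_zero]
  have z31 : ⁅e 3, e 1⁆ = 0 := by rw [← lie_skew, z13, neg_zero]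
  have z51 : ⁅e 5, e 1⁆ = 0 := by rw [← lie_skew, z15, neg_zero]
  have z42 : ⁅e 4, e 2⁆ = 0 := by rw [← lie_skew, z24, neg_zero]
  have z52 : ⁅e 5, e 2⁆ = 0 := by rw [← lie_skew, z25, neg_zero]
  have z43 : ⁅e 4, e 3⁆ = 0 := by rw [← lie_skew, z34, neg_zero]
  have z53 : ⁅e 5, e 3⁆ = 0 := by rw [← lie_skew, z35, neg_zero]
  have z54 : ⁅e 5, e 4⁆ = 0 := by rw [← lie_skew, z45, neg_zero]

  have hA0 : A (e 0) = ((1) * b1 * c₁) • e 2 + ((1) * b2 * c₂) • e 3 + ((1) * b3 * c₃) • e 4 := by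
    rw [hAdef, LinearMap.neg_apply, LieAlgebra.ad_apply, hy]
    simp only [add_lie, smul_lie, h01, h02, h03, h41, h23, h10, h20, h30, h14, h32,
      z04, z05, z12, z13, z15, z24, z25, z34, z35, z45, z40, z50, z21, z31, z51, z42, z52,
      z43, z53, z54, lie_self, smul_zero, smul_neg, smul_smul, add_zero, zero_add, neg_add_rev,
      neg_neg, neg_zero]
    try module
  have hA1 : A (e 1) = ((-1) * b0 * c₁) • e 2 + ((-1) * b4 * c₄) • e 5 := by
    rw [hAdef, LinearMap.neg_apply, LieAlgebra.ad_apply, hy]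
    simp only [add_lie, smul_lie, h01, h02, h03, h41, h23, h10, h20, h30, h14, h32,
      z04, z05, z12, z13, z15, z24, z25, z34, z35, z45, z40, z50, z21, z31, z51, z42, z52,
      z43, z53, z54, lie_self, smul_zero, smul_neg, smul_smul, add_zero, zero_add, neg_add_rev,
      neg_neg, neg_zero]
    try module
  have hA2 : A (e 2) = ((-1) * b0 * c₂) • e 3 + ((1) * b3 * c₅) • e 5 := by
    rw [hAdef, LinearMap.neg_apply, LieAlgebra.ad_apply, hy]
    simp only [add_lie, smul_lie, h01, h02, h03, h41, h23, h10, h20, h30, h14, h32,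
      z04, z05, z12, z13, z15, z24, z25, z34, z35, z45, z40, z50, z21, z31, z51, z42, z52,
      z43, z53, z54, lie_self, smul_zero, smul_neg, smul_smul, add_zero, zero_add, neg_add_rev,
      neg_neg, neg_zero]
    try module
  have hA3 : A (e 3) = ((-1) * b0 * c₃) • e 4 + ((-1) * b2 * c₅) • e 5 := by
    rw [hAdef, LinearMap.neg_apply, LieAlgebra.ad_apply, hy]
    simp only [add_lie, smul_lie, h01, h02, h03, h41, h23, h10, h20, h30, h14, h32,
      z04, z05, z12, z13, z15, z24, z25, z34, z35, z45, z40, z50, z21, z31, z51, z42, z52,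
      z43, z53, z54, lie_self, smul_zero, smul_neg, smul_smul, add_zero, zero_add, neg_add_rev,
      neg_neg, neg_zero]
    try module
  have hA4 : A (e 4) = ((1) * b1 * c₄) • e 5 := by
    rw [hAdef, LinearMap.neg_apply, LieAlgebra.ad_apply, hy]
    simp only [add_lie, smul_lie, h01, h02, h03, h41, h23, h10, h20, h30, h14, h32,
      z04, z05, z12, z13, z15, z24, z25, z34, z35, z45, z40, z50, z21, z31, z51, z42, z52,
      z43, z53, z54, lie_self, smul_zero, smul_neg, smul_smul, add_zero, zero_add, neg_add_rev,
      neg_neg, neg_zero]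
    try module
  have hA5 : A (e 5) = 0 := by
    rw [hAdef, LinearMap.neg_apply, LieAlgebra.ad_apply, hy]
    simp only [add_lie, smul_lie, h01, h02, h03, h41, h23, h10, h20, h30, h14, h32,
      z04, z05, z12, z13, z15, z24, z25, z34, z35, z45, z40, z50, z21, z31, z51, z42, z52,
      z43, z53, z54, lie_self, smul_zero, smul_neg, smul_smul, add_zero, zero_add, neg_add_rev,
      neg_neg, neg_zero]
    try module
  have hA5pow : A ^ 5 = 0 := by
    have expand : ∀ v : n, (A ^ 5) v = A (A (A (A (A v)))) := fun v => rfl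
    apply e.ext
    intro i
    fin_cases i
    · show (A ^ 5) (e 0) = (0 : Module.End ℂ n) (e 0)
      rw [expand]
      simp only [map_zero, map_add, map_smul, hA0, hA1, hA2, hA3, hA4, hA5, smul_add,
        smul_smul, smul_zero, add_zero, zero_add, LinearMap.zero_apply]
      try module
    · show (A ^ 5) (e 1) = (0 : Module.End ℂ n) (e 1)
      rw [expand]
      simp only [map_zero, map_add, map_smul, hA0, hA1, hA2, hA3, hA4, hA5, smul_add,
        smul_smul, smul_zero, add_zero, zero_add, LinearMap.zero_apply]
      try module
    · show (A ^ 5) (e 2) = (0 : Module.End ℂ n) (e 2)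
      rw [expand]
      simp only [map_zero, map_add, map_smul, hA0, hA1, hA2, hA3, hA4, hA5, smul_add,
        smul_smul, smul_zero, add_zero, zero_add, LinearMap.zero_apply]
      try module
    · show (A ^ 5) (e 3) = (0 : Module.End ℂ n) (e 3)
      rw [expand]
      simp only [map_zero, map_add, map_smul, hA0, hA1, hA2, hA3, hA4, hA5, smul_add,
        smul_smul, smul_zero, add_zero, zero_add, LinearMap.zero_apply]
      try module
    · show (A ^ 5) (e 4) = (0 : Module.End ℂ n) (e 4)
      rw [expand]
      simp only [map_zero, map_add, map_smul, hA0, hA1, hA2, hA3, hA4, hA5, smul_add,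
        smul_smul, smul_zero, add_zero, zero_add, LinearMap.zero_apply]
      try module
    · show (A ^ 5) (e 5) = (0 : Module.End ℂ n) (e 5)
      rw [expand]
      simp only [map_zero, map_add, map_smul, hA0, hA1, hA2, hA3, hA4, hA5, smul_add,
        smul_smul, smul_zero, add_zero, zero_add, LinearMap.zero_apply]
      try module

  have hE := expNil_eq5 A hA5pow
  refine ⟨?_, ?_, ?_, ?_, ?_, ?_⟩ <;>
    · rw [hE]
      simp only [LinearMap.add_apply, LinearMap.smul_apply, Module.End.one_apply, pow_succ,
        pow_zero, one_mul, Module.End.mul_apply, map_add, map_smul,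
        hA0, hA1, hA2, hA3, hA4, hA5, map_zero, smul_add, smul_smul, smul_zero, add_zero, zero_add]
      try module
set_option maxHeartbeats 2000000 in
theorem stmt8 {n : Type*} [LieRing n] [LieAlgebra ℂ n]
    (α β : EuclideanSpace ℝ (Fin 2))
    (hαα : ⟪α, α⟫ = 1) (hββ : ⟪β, β⟫ = 3) (hαβ : ⟪α, β⟫ = -(3/2))
    -- the six positive roots of `G₂`: `α, β, α+β, 2α+β, 3α+β, 3α+2β`, indexed by `Fin 6`
    (root : Fin 6 → EuclideanSpace ℝ (Fin 2))
    (hroot : root = ![α, β, α + β, (2:ℝ) • α + β, (3:ℝ) • α + β, (3:ℝ) • α + (2:ℝ) • β])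
    (c₁ c₂ c₃ c₄ c₅ : ℂ)
    (hc₁ : c₁ ≠ 0) (hc₂ : c₂ ≠ 0) (hc₃ : c₃ ≠ 0) (hc₄ : c₄ ≠ 0) (hc₅ : c₅ ≠ 0)
    (e : Module.Basis (Fin 6) ℂ n)
    (h01 : ⁅e 0, e 1⁆ = c₁ • e 2)
    (h02 : ⁅e 0, e 2⁆ = c₂ • e 3)
    (h03 : ⁅e 0, e 3⁆ = c₃ • e 4)
    (h41 : ⁅e 4, e 1⁆ = c₄ • e 5)
    (h23 : ⁅e 2, e 3⁆ = c₅ • e 5)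
    (h0 : ∀ i j : Fin 6, root i + root j ∉ Set.range root → ⁅e i, e j⁆ = 0)
    (hnil : ∀ x : n, IsNilpotent (LieAlgebra.ad ℂ n x))
    (ξ : Fin 6 → ℂ) (hξ₀ : ξ 0 ≠ 0) (hξ₅ : ξ 5 ≠ 0)
    (lam : Module.Dual ℂ n) :
    lam ∈ basicSubvariety e {0, 5} ξ ↔
      (lam (e 5) = ξ 5 ∧
        2 * c₅ * lam (e 0) * lam (e 5) - 2 * c₃ * lam (e 2) * lam (e 4) +
          c₂ * lam (e 3) ^ 2 = 2 * c₅ * ξ 0 * ξ 5) := by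
  have hβα : (inner ℝ β α : ℝ) = -(3/2) := by rw [real_inner_comm]; exact hαβ
  have key : ∀ p q p' q' : ℝ, p • α + q • β = p' • α + q' • β → p = p' ∧ q = q' := by
    intro p q p' q' h
    have h1 := congrArg (fun v => (inner ℝ v α : ℝ)) h
    have h2 := congrArg (fun v => (inner ℝ v β : ℝ)) h
    simp only [inner_add_left, real_inner_smul_left, hαα, hββ, hβα, hαβ] at h1 h2
    constructor <;> linarith
  have nmem : ∀ p q : ℝ, (p ≠ 1 ∨ q ≠ 0) → (p ≠ 0 ∨ q ≠ 1) → (p ≠ 1 ∨ q ≠ 1) →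
      (p ≠ 2 ∨ q ≠ 1) → (p ≠ 3 ∨ q ≠ 1) → (p ≠ 3 ∨ q ≠ 2) →
      p • α + q • β ∉ Set.range root := by
    intro p q n1 n2 n3 n4 n5 n6 ⟨i, hi⟩
    rw [hroot] at hi
    fin_cases i <;> norm_num [Matrix.cons_val_zero, Matrix.cons_val_one, Matrix.head_cons] at hi
    · obtain ⟨hp, hq⟩ := key 1 0 p q (by rw [← hi] <;> module)
      exact n1.elim (fun h => h hp.symm) (fun h => h hq.symm)
    · obtain ⟨hp, hq⟩ := key 0 1 p q (by rw [← hi] <;> module)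
      exact n2.elim (fun h => h hp.symm) (fun h => h hq.symm)
    · obtain ⟨hp, hq⟩ := key 1 1 p q (by rw [← hi] <;> module)
      exact n3.elim (fun h => h hp.symm) (fun h => h hq.symm)
    · obtain ⟨hp, hq⟩ := key 2 1 p q (by rw [← hi] <;> module)
      exact n4.elim (fun h => h hp.symm) (fun h => h hq.symm)
    · obtain ⟨hp, hq⟩ := key 3 1 p q (by rw [← hi] <;> module)
      exact n5.elim (fun h => h hp.symm) (fun h => h hq.symm)
    · obtain ⟨hp, hq⟩ := key 3 2 p q (by rw [← hi] <;> module)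
      exact n6.elim (fun h => h hp.symm) (fun h => h hq.symm)
  have hr0 : root 0 = α := by rw [hroot]; rfl
  have hr1 : root 1 = β := by rw [hroot]; rfl
  have hr2 : root 2 = α + β := by rw [hroot]; rfl
  have hr3 : root 3 = (2:ℝ) • α + β := by rw [hroot]; rfl
  have hr4 : root 4 = (3:ℝ) • α + β := by rw [hroot]; rfl
  have hr5 : root 5 = (3:ℝ) • α + (2:ℝ) • β := by rw [hroot]; rfl
  have z04 : ⁅e 0, e 4⁆ = 0 := by
    refine h0 0 4 ?_
    rw [hr0, hr4, show (α) + ((3:ℝ) • α + β) = (4:ℝ) • α + (1:ℝ) • β from by module]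
    exact nmem 4 1 (by norm_num) (by norm_num) (by norm_num) (by norm_num) (by norm_num) (by norm_num)
  have z05 : ⁅e 0, e 5⁆ = 0 := by
    refine h0 0 5 ?_
    rw [hr0, hr5, show (α) + ((3:ℝ) • α + (2:ℝ) • β) = (4:ℝ) • α + (2:ℝ) • β from by module]
    exact nmem 4 2 (by norm_num) (by norm_num) (by norm_num) (by norm_num) (by norm_num) (by norm_num)
  have z12 : ⁅e 1, e 2⁆ = 0 := by
    refine h0 1 2 ?_
    rw [hr1, hr2, show (β) + (α + β) = (1:ℝ) • α + (2:ℝ) • β from by module]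
    exact nmem 1 2 (by norm_num) (by norm_num) (by norm_num) (by norm_num) (by norm_num) (by norm_num)
  have z13 : ⁅e 1, e 3⁆ = 0 := by
    refine h0 1 3 ?_
    rw [hr1, hr3, show (β) + ((2:ℝ) • α + β) = (2:ℝ) • α + (2:ℝ) • β from by module]
    exact nmem 2 2 (by norm_num) (by norm_num) (by norm_num) (by norm_num) (by norm_num) (by norm_num)
  have z15 : ⁅e 1, e 5⁆ = 0 := by
    refine h0 1 5 ?_
    rw [hr1, hr5, show (β) + ((3:ℝ) • α + (2:ℝ) • β) = (3:ℝ) • α + (3:ℝ) • β from by module]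
    exact nmem 3 3 (by norm_num) (by norm_num) (by norm_num) (by norm_num) (by norm_num) (by norm_num)
  have z24 : ⁅e 2, e 4⁆ = 0 := by
    refine h0 2 4 ?_
    rw [hr2, hr4, show (α + β) + ((3:ℝ) • α + β) = (4:ℝ) • α + (2:ℝ) • β from by module]
    exact nmem 4 2 (by norm_num) (by norm_num) (by norm_num) (by norm_num) (by norm_num) (by norm_num)
  have z25 : ⁅e 2, e 5⁆ = 0 := by
    refine h0 2 5 ?_
    rw [hr2, hr5, show (α + β) + ((3:ℝ) • α + (2:ℝ) • β) = (4:ℝ) • α + (3:ℝ) • β from by module]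
    exact nmem 4 3 (by norm_num) (by norm_num) (by norm_num) (by norm_num) (by norm_num) (by norm_num)
  have z34 : ⁅e 3, e 4⁆ = 0 := by
    refine h0 3 4 ?_
    rw [hr3, hr4, show ((2:ℝ) • α + β) + ((3:ℝ) • α + β) = (5:ℝ) • α + (2:ℝ) • β from by module]
    exact nmem 5 2 (by norm_num) (by norm_num) (by norm_num) (by norm_num) (by norm_num) (by norm_num)
  have z35 : ⁅e 3, e 5⁆ = 0 := by
    refine h0 3 5 ?_
    rw [hr3, hr5, show ((2:ℝ) • α + β) + ((3:ℝ) • α + (2:ℝ) • β) = (5:ℝ) • α + (3:ℝ) • β from by module]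
    exact nmem 5 3 (by norm_num) (by norm_num) (by norm_num) (by norm_num) (by norm_num) (by norm_num)
  have z45 : ⁅e 4, e 5⁆ = 0 := by
    refine h0 4 5 ?_
    rw [hr4, hr5, show ((3:ℝ) • α + β) + ((3:ℝ) • α + (2:ℝ) • β) = (6:ℝ) • α + (3:ℝ) • β from by module]
    exact nmem 6 3 (by norm_num) (by norm_num) (by norm_num) (by norm_num) (by norm_num) (by norm_num)
  have h14 : ⁅e 1, e 4⁆ = -(c₄ • e 5) := by rw [← lie_skew, h41]
  have hrel : c₁ * c₅ = c₃ * c₄ := by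
    have jac : ⁅e 0, ⁅e 1, e 3⁆⁆ = ⁅⁅e 0, e 1⁆, e 3⁆ + ⁅e 1, ⁅e 0, e 3⁆⁆ := leibniz_lie _ _ _
    rw [z13, lie_zero, h01, h03, smul_lie, lie_smul, h23, h14, smul_smul, smul_neg, smul_smul]
      at jac
    have : (c₁ * c₅ - c₃ * c₄) • e 5 = 0 := by
      rw [sub_smul, sub_eq_add_neg]
      exact jac.symm
    rcases smul_eq_zero.mp this with h | h
    · exact sub_eq_zero.mp h
    · exact absurd h (e.ne_zero 5)
  have hpair : ∀ μ : Fin 6 → Module.Dual ℂ n,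
      (∑ i ∈ ({0, 5} : Finset (Fin 6)), μ i) = μ 0 + μ 5 :=
    fun μ => Finset.sum_pair (by decide)
  constructor
  · rintro ⟨μ, hmem, rfl⟩
    obtain ⟨xw, hxw⟩ := hmem 0 (by simp)
    obtain ⟨xv, hxv⟩ := hmem 5 (by simp)
    rw [Finset.sum_singleton] at hxw hxv
    have hwexp : xw = e.repr xw 0 • e 0 + e.repr xw 1 • e 1 + e.repr xw 2 • e 2 +
        e.repr xw 3 • e 3 + e.repr xw 4 • e 4 + e.repr xw 5 • e 5 := by
      rw [← Fin.sum_univ_six (fun i => e.repr xw i • e i), e.sum_repr]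
    have hvexp : xv = e.repr xv 0 • e 0 + e.repr xv 1 • e 1 + e.repr xv 2 • e 2 +
        e.repr xv 3 • e 3 + e.repr xv 4 • e 4 + e.repr xv 5 • e 5 := by
      rw [← Fin.sum_univ_six (fun i => e.repr xv i • e i), e.sum_repr]
    obtain ⟨W0, W1, W2, W3, W4, W5⟩ := computeE c₁ c₂ c₃ c₄ c₅ e h01 h02 h03 h41 h23
      z04 z05 z12 z13 z15 z24 z25 z34 z35 z45 xw _ _ _ _ _ _ hwexp
    obtain ⟨V0, V1, V2, V3, V4, V5⟩ := computeE c₁ c₂ c₃ c₄ c₅ e h01 h02 h03 h41 h23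
      z04 z05 z12 z13 z15 z24 z25 z34 z35 z45 xv _ _ _ _ _ _ hvexp
    have w0 : μ 0 (e 0) = ξ 0 := by
      rw [hxw, LinearMap.comp_apply, W0]
      simp [map_add, map_smul, Finsupp.add_apply, Finsupp.smul_apply, Module.Basis.coord_apply,
        Module.Basis.repr_self, Finsupp.single_apply, smul_eq_mul]
    have w1 : μ 0 (e 1) = 0 := by
      rw [hxw, LinearMap.comp_apply, W1]
      simp [map_add, map_smul, Finsupp.add_apply, Finsupp.smul_apply, Module.Basis.coord_apply,
        Module.Basis.repr_self, Finsupp.single_apply, smul_eq_mul]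
    have w2 : μ 0 (e 2) = 0 := by
      rw [hxw, LinearMap.comp_apply, W2]
      simp [map_add, map_smul, Finsupp.add_apply, Finsupp.smul_apply, Module.Basis.coord_apply,
        Module.Basis.repr_self, Finsupp.single_apply, smul_eq_mul]
    have w3 : μ 0 (e 3) = 0 := by
      rw [hxw, LinearMap.comp_apply, W3]
      simp [map_add, map_smul, Finsupp.add_apply, Finsupp.smul_apply, Module.Basis.coord_apply,
        Module.Basis.repr_self, Finsupp.single_apply, smul_eq_mul]
    have w4 : μ 0 (e 4) = 0 := by
      rw [hxw, LinearMap.comp_apply, W4]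
      simp [map_add, map_smul, Finsupp.add_apply, Finsupp.smul_apply, Module.Basis.coord_apply,
        Module.Basis.repr_self, Finsupp.single_apply, smul_eq_mul]
    have w5 : μ 0 (e 5) = 0 := by
      rw [hxw, LinearMap.comp_apply, W5]
      simp [map_add, map_smul, Finsupp.add_apply, Finsupp.smul_apply, Module.Basis.coord_apply,
        Module.Basis.repr_self, Finsupp.single_apply, smul_eq_mul]
    have v0 : μ 5 (e 0) = ξ 5 * ((-1/2) * e.repr xv 2 ^ 2 * c₂ * c₅ + (1/2) * e.repr xv 1 * e.repr xv 3 * c₃ * c₄ + (1/2) * e.repr xv 1 * e.repr xv 3 * c₁ * c₅ + (-1/6) * e.repr xv 0 * e.repr xv 1 * e.repr xv 2 * c₂ * c₃ * c₄ + (1/6) * e.repr xv 0 * e.repr xv 1 * e.repr xv 2 * c₁ * c₂ * c₅ + (1/24) * e.repr xv 0 ^ 2 * e.repr xv 1 ^ 2 * c₁ * c₂ * c₃ * c₄) := by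
      rw [hxv, LinearMap.comp_apply, V0]
      simp [map_add, map_smul, Finsupp.add_apply, Finsupp.smul_apply, Module.Basis.coord_apply,
        Module.Basis.repr_self, Finsupp.single_apply, smul_eq_mul]
      try ring
    have v1 : μ 5 (e 1) = ξ 5 * ((-1) * e.repr xv 4 * c₄ + (-1/2) * e.repr xv 0 * e.repr xv 3 * c₁ * c₅ + (-1/6) * e.repr xv 0 ^ 2 * e.repr xv 2 * c₁ * c₂ * c₅ + (-1/24) * e.repr xv 0 ^ 3 * e.repr xv 1 * c₁ * c₂ * c₃ * c₄) := by
      rw [hxv, LinearMap.comp_apply, V1]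
      simp [map_add, map_smul, Finsupp.add_apply, Finsupp.smul_apply, Module.Basis.coord_apply,
        Module.Basis.repr_self, Finsupp.single_apply, smul_eq_mul]
      try ring
    have v2 : μ 5 (e 2) = ξ 5 * ((1) * e.repr xv 3 * c₅ + (1/2) * e.repr xv 0 * e.repr xv 2 * c₂ * c₅ + (1/6) * e.repr xv 0 ^ 2 * e.repr xv 1 * c₂ * c₃ * c₄) := by
      rw [hxv, LinearMap.comp_apply, V2]
      simp [map_add, map_smul, Finsupp.add_apply, Finsupp.smul_apply, Module.Basis.coord_apply,
        Module.Basis.repr_self, Finsupp.single_apply, smul_eq_mul]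
      try ring
    have v3 : μ 5 (e 3) = ξ 5 * ((-1) * e.repr xv 2 * c₅ + (-1/2) * e.repr xv 0 * e.repr xv 1 * c₃ * c₄) := by
      rw [hxv, LinearMap.comp_apply, V3]
      simp [map_add, map_smul, Finsupp.add_apply, Finsupp.smul_apply, Module.Basis.coord_apply,
        Module.Basis.repr_self, Finsupp.single_apply, smul_eq_mul]
      try ring
    have v4 : μ 5 (e 4) = ξ 5 * ((1) * e.repr xv 1 * c₄) := by
      rw [hxv, LinearMap.comp_apply, V4]
      simp [map_add, map_smul, Finsupp.add_apply, Finsupp.smul_apply, Module.Basis.coord_apply,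
        Module.Basis.repr_self, Finsupp.single_apply, smul_eq_mul]
      try ring
    have v5 : μ 5 (e 5) = ξ 5 := by
      rw [hxv, LinearMap.comp_apply, V5]
      simp [map_add, map_smul, Finsupp.add_apply, Finsupp.smul_apply, Module.Basis.coord_apply,
        Module.Basis.repr_self, Finsupp.single_apply, smul_eq_mul]
      try ring
    rw [hpair μ]
    simp only [LinearMap.add_apply, w0, w2, w3, w4, w5, v0, v2, v3, v4, v5]
    constructor
    · rw [zero_add]
    · linear_combination (ξ 5^2 * (e.repr xv 1 * e.repr xv 3 * c₅ +
        (1/3) * e.repr xv 0 * e.repr xv 1 * e.repr xv 2 * c₂ * c₅ +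
        (1/12) * e.repr xv 0 ^ 2 * e.repr xv 1 ^ 2 * c₂ * c₃ * c₄)) * hrel
  · rintro ⟨h5, hinv⟩
    rw [h5] at hinv
    set x1 : ℂ := lam (e 4) / (ξ 5 * c₄) with hx1
    set x2 : ℂ := -(lam (e 3)) / (ξ 5 * c₅) with hx2
    set x3 : ℂ := lam (e 2) / (ξ 5 * c₅) with hx3
    set x4 : ℂ := -(lam (e 1)) / (ξ 5 * c₄) with hx4
    set y : n := x1 • e 1 + x2 • e 2 + x3 • e 3 + x4 • e 4 with hydef
    have hyexp : y = (0:ℂ) • e 0 + x1 • e 1 + x2 • e 2 + x3 • e 3 + x4 • e 4 + (0:ℂ) • e 5 := by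
      rw [hydef]; module
    obtain ⟨Y0, Y1, Y2, Y3, Y4, Y5⟩ := computeE c₁ c₂ c₃ c₄ c₅ e h01 h02 h03 h41 h23
      z04 z05 z12 z13 z15 z24 z25 z34 z35 z45 y 0 x1 x2 x3 x4 0 hyexp
    set F : Module.Dual ℂ n := (ξ 5 • e.coord 5).comp (expNil (-(LieAlgebra.ad ℂ n y)))
      with hF
    have u0 : F (e 0) = ξ 5 * ((-1/2) * x2 ^ 2 * c₂ * c₅ + (1/2) * x1 * x3 * c₃ * c₄ + (1/2) * x1 * x3 * c₁ * c₅) := by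
      rw [hF, LinearMap.comp_apply, Y0]
      simp [map_add, map_smul, Finsupp.add_apply, Finsupp.smul_apply, Module.Basis.coord_apply,
        Module.Basis.repr_self, Finsupp.single_apply, smul_eq_mul]
      try ring
    have u1 : F (e 1) = ξ 5 * ((-1) * x4 * c₄) := by
      rw [hF, LinearMap.comp_apply, Y1]
      simp [map_add, map_smul, Finsupp.add_apply, Finsupp.smul_apply, Module.Basis.coord_apply,
        Module.Basis.repr_self, Finsupp.single_apply, smul_eq_mul]
      try ring
    have u2 : F (e 2) = ξ 5 * (x3 * c₅) := by
      rw [hF, LinearMap.comp_apply, Y2]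
      simp [map_add, map_smul, Finsupp.add_apply, Finsupp.smul_apply, Module.Basis.coord_apply,
        Module.Basis.repr_self, Finsupp.single_apply, smul_eq_mul]
      try ring
    have u3 : F (e 3) = ξ 5 * ((-1) * x2 * c₅) := by
      rw [hF, LinearMap.comp_apply, Y3]
      simp [map_add, map_smul, Finsupp.add_apply, Finsupp.smul_apply, Module.Basis.coord_apply,
        Module.Basis.repr_self, Finsupp.single_apply, smul_eq_mul]
      try ring
    have u4 : F (e 4) = ξ 5 * (x1 * c₄) := by
      rw [hF, LinearMap.comp_apply, Y4]
      simp [map_add, map_smul, Finsupp.add_apply, Finsupp.smul_apply, Module.Basis.coord_apply,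
        Module.Basis.repr_self, Finsupp.single_apply, smul_eq_mul]
      try ring
    have u5 : F (e 5) = ξ 5 := by
      rw [hF, LinearMap.comp_apply, Y5]
      simp [map_add, map_smul, Finsupp.add_apply, Finsupp.smul_apply, Module.Basis.coord_apply,
        Module.Basis.repr_self, Finsupp.single_apply, smul_eq_mul]
      try ring
    have c0 : ∀ k : Fin 6, (ξ 0 • e.coord 0) (e k) = if k = 0 then ξ 0 else 0 := by
      intro k
      simp [Module.Basis.coord_apply, Module.Basis.repr_self, Finsupp.single_apply]
    refine ⟨fun i => if i = 0 then ξ 0 • e.coord 0 else F, ?_, ?_⟩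
    · intro i hi
      rcases Finset.mem_insert.mp hi with rfl | hi
      · refine ⟨0, ?_⟩
        rw [Finset.sum_singleton, map_zero, neg_zero, expNil_zero]
        simp only [if_pos rfl]
        rfl
      · rw [Finset.mem_singleton.mp hi]
        exact ⟨y, by rw [Finset.sum_singleton]; simp only [if_neg (by decide : (5:Fin 6) ≠ 0)]; rfl⟩
    · rw [hpair]
      simp only [if_pos rfl, if_neg (by decide : (5:Fin 6) ≠ 0)]
      have hne : ξ 5 * c₄ ≠ 0 := mul_ne_zero hξ₅ hc₄
      have hne5 : ξ 5 * c₅ ≠ 0 := mul_ne_zero hξ₅ hc₅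
      apply e.ext
      intro i
      fin_cases i
      · show lam (e 0) = (ξ 0 • e.coord 0 + F) (e 0)
        have h2 : lam (e 0) - ξ 0 = (2*c₃*lam (e 2)*lam (e 4) - c₂*lam (e 3)^2) / (2*c₅*ξ 5) := by
          rw [eq_div_iff (mul_ne_zero (mul_ne_zero two_ne_zero hc₅) hξ₅)]
          linear_combination hinv
        rw [LinearMap.add_apply, u0, c0 0, if_pos rfl, hx1, hx2, hx3,
          ← sub_eq_iff_eq_add', h2]
        field_simp
        linear_combination (-lam (e 2)*lam (e 4)) * hrel
      · show lam (e 1) = (ξ 0 • e.coord 0 + F) (e 1)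
        rw [LinearMap.add_apply, u1, c0 1, if_neg (by decide), hx4]
        field_simp
        ring
      · show lam (e 2) = (ξ 0 • e.coord 0 + F) (e 2)
        rw [LinearMap.add_apply, u2, c0 2, if_neg (by decide), hx3]
        field_simp
        ring
      · show lam (e 3) = (ξ 0 • e.coord 0 + F) (e 3)
        rw [LinearMap.add_apply, u3, c0 3, if_neg (by decide), hx2]
        field_simp
        ring
      · show lam (e 4) = (ξ 0 • e.coord 0 + F) (e 4)
        rw [LinearMap.add_apply, u4, c0 4, if_neg (by decide), hx1]
        field_simp
        ring
      · show lam (e 5) = (ξ 0 • e.coord 0 + F) (e 5)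
        rw [LinearMap.add_apply, u5, c0 5, if_neg (by decide), h5, zero_add]
end
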